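/- For all integers k ≥ 0, ∑_{n=0}^∞ C(2(n+k), n) 6^{-2(n+k)} = (3√2/4)(3-2√2)^{2k} and ∑_{n=0}^∞ C(2(n+k)+1, n) 6^{-2(n+k)-1} = (3√2/4)(3-2√2)^{2k+1}. -/

import Mathlib

noncomputable section CBAux

private def tt (j n : ℕ) : ℝ := (Nat.choose (2 * n + j) n : ℝ) / 6 ^ (2 * n + j)

private lemma choose_le_two_pow (m k : ℕ) : Nat.choose m k ≤ 2 ^ m := by
  rcases le_or_gt k m with h | h
  · calc Nat.choose m k ≤ ∑ i ∈ Finset.range (m + 1), Nat.choose m i :=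
        Finset.single_le_sum (fun i _ => Nat.zero_le _) (Finset.mem_range.mpr (by omega))
    _ = 2 ^ m := Nat.sum_range_choose m
  · simp [Nat.choose_eq_zero_of_lt h]

private lemma tt_nonneg (j n : ℕ) : 0 ≤ tt j n := by
  unfold tt; positivity

private lemma tt_le (j n : ℕ) : tt j n ≤ (1/3 : ℝ) ^ j * (1/9 : ℝ) ^ n := by
  unfold tt
  rw [div_le_iff₀ (by positivity)]
  calc (Nat.choose (2*n+j) n : ℝ) ≤ 2 ^ (2*n+j) := by
        exact_mod_cast choose_le_two_pow (2*n+j) n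
  _ = (1/3:ℝ)^j * (1/9:ℝ)^n * 6 ^ (2*n+j) := by
        rw [pow_add, pow_add, pow_mul, pow_mul]
        have a1 : ((2:ℝ)^2)^n = ((1/9:ℝ)*6^2)^n := by norm_num
        have a2 : ((2:ℝ))^j = ((1/3:ℝ)*6)^j := by norm_num
        rw [a1, a2, mul_pow, mul_pow]
        ring

private lemma tt_summable (j : ℕ) : Summable (tt j) := by
  apply Summable.of_nonneg_of_le (tt_nonneg j) (tt_le j)
  exact (summable_geometric_of_lt_one (by norm_num) (by norm_num)).mul_left _

private def T (j : ℕ) : ℝ := ∑' n, tt j n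

private lemma T_nonneg (j : ℕ) : 0 ≤ T j :=
  tsum_nonneg (tt_nonneg j)

private lemma T_le (j : ℕ) : T j ≤ 9/8 := by
  have h1 : T j ≤ ∑' n : ℕ, (1/3 : ℝ) ^ j * (1/9 : ℝ) ^ n :=
    Summable.tsum_le_tsum (tt_le j) (tt_summable j)
      ((summable_geometric_of_lt_one (by norm_num) (by norm_num)).mul_left _)
  rw [tsum_mul_left, tsum_geometric_of_lt_one (by norm_num) (by norm_num)] at h1
  calc T j ≤ (1/3:ℝ)^j * (1 - 1/9)⁻¹ := h1
  _ ≤ 1 * (1 - 1/9:ℝ)⁻¹ := by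
      have h := pow_le_one₀ (by norm_num : (0:ℝ) ≤ 1/3) (by norm_num : (1/3:ℝ) ≤ 1) (n := j)
      nlinarith
  _ ≤ 9/8 := by norm_num

private lemma T_rec (j : ℕ) : 6 * T (j+1) = T j + T (j+2) := by
  have key : ∀ m : ℕ, 6 * tt (j+1) (m+1) = tt (j+2) m + tt j (m+1) := by
    intro m
    unfold tt
    rw [show 2*(m+1)+(j+1) = (2*m+j+2)+1 from by omega,
        show 2*m+(j+2) = 2*m+j+2 from by omega,
        show 2*(m+1)+j = 2*m+j+2 from by omega,
        Nat.choose_succ_succ' (2*m+j+2) m]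
    push_cast
    rw [pow_succ]
    have h1 : (0:ℝ) < 6 ^ (2*m+j+2) := by positivity
    field_simp
  have hs1 := tt_summable (j+1)
  have hs0 := tt_summable j
  have hs2 := tt_summable (j+2)
  have hA : T (j+1) = tt (j+1) 0 + ∑' m, tt (j+1) (m+1) := hs1.tsum_eq_zero_add
  have hB : T j = tt j 0 + ∑' m, tt j (m+1) := hs0.tsum_eq_zero_add
  have hsum : ∑' m, (6:ℝ) * tt (j+1) (m+1)
      = (∑' m, tt (j+2) m) + ∑' m, tt j (m+1) := by
    rw [tsum_congr key]
    exact Summable.tsum_add hs2 ((summable_nat_add_iff 1).mpr hs0)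
  rw [tsum_mul_left] at hsum
  have h0 : 6 * tt (j+1) 0 = tt j 0 := by
    unfold tt
    simp only [Nat.mul_zero, Nat.zero_add, Nat.choose_zero_right]
    rw [pow_succ]
    push_cast
    field_simp
  rw [hA, hB]
  have h3 : (∑' m, tt (j+2) m) = T (j+2) := rfl
  rw [h3] at hsum
  linarith [hsum, h0]

private lemma sq2 : Real.sqrt 2 * Real.sqrt 2 = 2 :=
  Real.mul_self_sqrt (by norm_num)

private lemma sqrt2_lt : Real.sqrt 2 < 3/2 := by
  nlinarith [sq2, Real.sqrt_nonneg 2]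

private lemma sqrt2_gt : (1:ℝ) < Real.sqrt 2 := by
  nlinarith [sq2, Real.sqrt_nonneg 2]

private lemma T_general :
    ∀ j, T j = (((3+2*Real.sqrt 2) * T 0 - T 1)/(4*Real.sqrt 2)) * (3-2*Real.sqrt 2)^j
      + ((T 1 - (3-2*Real.sqrt 2) * T 0)/(4*Real.sqrt 2)) * (3+2*Real.sqrt 2)^j := by
  set r := 3 - 2*Real.sqrt 2 with hr
  set s := 3 + 2*Real.sqrt 2 with hs
  set α := ((s * T 0 - T 1)/(4*Real.sqrt 2)) with hα
  set β := ((T 1 - r * T 0)/(4*Real.sqrt 2)) with hβ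
  have h2 : (0:ℝ) < Real.sqrt 2 := by positivity
  have key : ∀ j, T j = α * r^j + β * s^j ∧ T (j+1) = α * r^(j+1) + β * s^(j+1) := by
    intro j
    induction j with
    | zero =>
      constructor
      · simp only [pow_zero, mul_one, hα, hβ]
        field_simp
        ring
      · simp only [pow_one, hα, hβ, hr, hs]
        field_simp
        simp only [zero_add, pow_one]
        ring
    | succ n ih =>
      refine ⟨ih.2, ?_⟩
      have hrec := T_rec n
      have hr2 : r^(n+2) = 6 * r^(n+1) - r^n := by
        have : r^(n+2) = r^n * r^2 := by ring
        have hq : r^2 = 6*r - 1 := by rw [hr]; nlinarith [sq2]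
        rw [this, hq]; ring
      have hs2 : s^(n+2) = 6 * s^(n+1) - s^n := by
        have : s^(n+2) = s^n * s^2 := by ring
        have hq : s^2 = 6*s - 1 := by rw [hs]; nlinarith [sq2]
        rw [this, hq]; ring
      have : T (n+2) = 6 * T (n+1) - T n := by linarith [hrec]
      rw [this, ih.1, ih.2, hr2, hs2]; ring
  exact fun j => (key j).1

private lemma beta_zero : T 1 = (3-2*Real.sqrt 2) * T 0 := by
  set r := 3 - 2*Real.sqrt 2 with hr
  set s := 3 + 2*Real.sqrt 2 with hs
  set α := ((s * T 0 - T 1)/(4*Real.sqrt 2)) with hα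
  set β := ((T 1 - r * T 0)/(4*Real.sqrt 2)) with hβ
  have hrpos : 0 < r := by rw [hr]; nlinarith [sqrt2_lt]
  have hrlt : r < 1 := by rw [hr]; nlinarith [sqrt2_gt]
  have hs1 : 1 < s := by rw [hs]; nlinarith [sqrt2_gt]
  have hb0 : β = 0 := by
    by_contra hb
    obtain ⟨j, hj⟩ := pow_unbounded_of_one_lt ((9/8 + |α|)/|β|) hs1
    have hbpos : 0 < |β| := abs_pos.mpr hb
    have h1 : |β| * s^j ≤ 9/8 + |α| := by
      have hTj := T_general j
      have hab : β * s^j = T j - α * r^j := by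
        rw [show T j = α * r^j + β * s^j from hTj]; ring
      have hTa : |T j| ≤ 9/8 := abs_le.mpr ⟨by linarith [T_nonneg j], T_le j⟩
      have hra : |α * r^j| ≤ |α| := by
        rw [abs_mul, abs_of_nonneg (pow_nonneg hrpos.le j)]
        nlinarith [abs_nonneg α, pow_le_one₀ hrpos.le hrlt.le (n := j),
          pow_nonneg hrpos.le j]
      calc |β| * s^j = |β * s^j| := by
            rw [abs_mul, abs_of_nonneg (pow_nonneg (by linarith : (0:ℝ) ≤ s) j)]
      _ = |T j - α * r^j| := by rw [hab]
      _ ≤ |T j| + |α * r^j| := by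
            have := abs_add_le (T j) (-(α * r^j))
            simpa [sub_eq_add_neg, abs_neg] using this
      _ ≤ 9/8 + |α| := by linarith
    rw [div_lt_iff₀ hbpos] at hj
    linarith [hj, h1]
  have h4 : (0:ℝ) < 4 * Real.sqrt 2 := by positivity
  have h5 := hb0
  rw [hβ] at h5
  rw [div_eq_zero_iff] at h5
  rcases h5 with h | h
  · linarith
  · linarith

private lemma T1_eq : T 1 = 3 * T 0 - 3 := by
  have key : ∀ n, tt 1 n = 3 * tt 0 (n+1) := by
    intro n
    unfold tt
    rw [show 2*(n+1)+0 = (2*n+1)+1 from by omega, Nat.choose_succ_succ,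
      Nat.choose_symm_half]
    push_cast
    rw [pow_succ]
    have h6 : (0:ℝ) < 6 ^ (2*n+1) := by positivity
    field_simp
    ring
  have : T 1 = ∑' n, 3 * tt 0 (n+1) := tsum_congr key
  rw [this, tsum_mul_left]
  have h0 : T 0 = tt 0 0 + ∑' n, tt 0 (n+1) := (tt_summable 0).tsum_eq_zero_add
  have ht00 : tt 0 0 = 1 := by unfold tt; norm_num
  rw [ht00] at h0
  linarith [h0]

private lemma T0_eq : T 0 = 3 * Real.sqrt 2 / 4 := by
  have h1 := T1_eq
  have h2 := beta_zero
  have h2p : (0:ℝ) < Real.sqrt 2 := by positivity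
  -- 3 T0 - 3 = (3 - 2√2) T0  ⇒  2√2 T0 = 3
  have h3 : 2 * Real.sqrt 2 * T 0 = 3 := by nlinarith [h1, h2]
  nlinarith [h3, sq2, h2p]

private lemma T_closed (j : ℕ) :
    T j = (3 * Real.sqrt 2 / 4) * (3 - 2*Real.sqrt 2)^j := by
  have hg := T_general j
  have hb : T 1 - (3-2*Real.sqrt 2) * T 0 = 0 := by linarith [beta_zero]
  rw [hb] at hg
  have hα : ((3+2*Real.sqrt 2) * T 0 - T 1)/(4*Real.sqrt 2) = T 0 := by
    rw [beta_zero]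
    have h2p : (0:ℝ) < Real.sqrt 2 := by positivity
    field_simp
    ring
  rw [hα, T0_eq] at hg
  simpa using hg

end CBAux

/-- For all `k ≥ 0`,
`∑_{n=0}^∞ C(2(n+k), n) 6^{-2(n+k)} = (3√2/4)(3-2√2)^{2k}` and
`∑_{n=0}^∞ C(2(n+k)+1, n) 6^{-2(n+k)-1} = (3√2/4)(3-2√2)^{2k+1}`. -/
theorem seqA_seqB_closed_form (k : ℕ) :
    (∑' n : ℕ, (Nat.choose (2 * (n + k)) n : ℝ) / 6 ^ (2 * (n + k)))
      = (3 * Real.sqrt 2 / 4) * (3 - 2 * Real.sqrt 2) ^ (2 * k) ∧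
    (∑' n : ℕ, (Nat.choose (2 * (n + k) + 1) n : ℝ) / 6 ^ (2 * (n + k) + 1))
      = (3 * Real.sqrt 2 / 4) * (3 - 2 * Real.sqrt 2) ^ (2 * k + 1) := by
  constructor
  · have h1 : (∑' n : ℕ, (Nat.choose (2 * (n + k)) n : ℝ) / 6 ^ (2 * (n + k))) = T (2*k) := by
      apply tsum_congr
      intro n
      unfold tt
      congr 2 <;> ring_nf
    rw [h1, T_closed]
  · have h1 : (∑' n : ℕ, (Nat.choose (2 * (n + k) + 1) n : ℝ) / 6 ^ (2 * (n + k) + 1))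
        = T (2*k+1) := by
      apply tsum_congr
      intro n
      unfold tt
      congr 2 <;> ring_nf
    rw [h1, T_closed]
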